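/- Let T be a bounded linear operator on a complex Hilbert space H. Then ω²(T) ≤ (1/2) ω([[O, (3/2)(T* T + T T*)],[T², O]]), where ω² denotes the square of the numerical radius. -/

import Mathlib

open ContinuousLinearMap

/-- The numerical radius of a bounded linear operator on a complex inner ℂ product space:
`ω(T) = sup_{‖x‖ = 1} |⟨Tx, x⟩|`. -/
noncomputable def numRadius {H : Type*} [NormedAddCommGroup H] [InnerProductSpace ℂ H]
    (T : H →L[ℂ] H) : ℝ :=
  ⨆ x : {x : H // ‖x‖ = 1}, ‖(inner ℂ (T x) (x : H) : ℂ)‖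

/-- The operator matrix `[[O, A], [B, O]]` acting on the Hilbert space direct sum
`H ⊕ H`, sending `(x, y)` to `(A y, B x)`. -/
noncomputable def offDiagOp {H : Type*} [NormedAddCommGroup H] [InnerProductSpace ℂ H]
    (A B : H →L[ℂ] H) : WithLp 2 (H × H) →L[ℂ] WithLp 2 (H × H) :=
  (((WithLp.prodContinuousLinearEquiv 2 ℂ H H).symm :
        (H × H) →L[ℂ] WithLp 2 (H × H)).comp
      ((A.comp (ContinuousLinearMap.snd ℂ H H)).prod
        (B.comp (ContinuousLinearMap.fst ℂ H H)))).comp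
    ((WithLp.prodContinuousLinearEquiv 2 ℂ H H : WithLp 2 (H × H) ≃L[ℂ] H × H) :
      WithLp 2 (H × H) →L[ℂ] H × H)

open ComplexConjugate

section Aux

variable {H : Type*} [NormedAddCommGroup H] [InnerProductSpace ℂ H]

private lemma numRadius_bddAbove (T : H →L[ℂ] H) :
    BddAbove (Set.range fun x : {x : H // ‖x‖ = 1} => ‖(inner ℂ (T x) (x : H) : ℂ)‖) := by
  refine ⟨‖T‖, ?_⟩
  rintro r ⟨⟨x, hx⟩, rfl⟩
  calc ‖(inner ℂ (T x) x : ℂ)‖ ≤ ‖T x‖ * ‖x‖ := norm_inner_le_norm _ _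
    _ ≤ ‖T‖ * ‖x‖ * ‖x‖ := by gcongr; exact T.le_opNorm x
    _ = ‖T‖ := by rw [hx]; ring

private lemma numRadius_nonneg' (T : H →L[ℂ] H) : 0 ≤ numRadius T :=
  Real.iSup_nonneg fun _ => norm_nonneg _

private lemma le_numRadius (T : H →L[ℂ] H) {x : H} (hx : ‖x‖ = 1) :
    ‖(inner ℂ (T x) x : ℂ)‖ ≤ numRadius T :=
  le_ciSup (numRadius_bddAbove T) (⟨x, hx⟩ : {x : H // ‖x‖ = 1})

private lemma numRadius_offDiag_ge (A B : H →L[ℂ] H) {x : H} (hx : ‖x‖ = 1)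
    {r : ℝ} (hr : 0 ≤ r) (hA : (inner ℂ (A x) x : ℂ) = (r : ℂ)) :
    (r + ‖(inner ℂ (B x) x : ℂ)‖) / 2 ≤ numRadius (offDiagOp A B) := by
  set q : ℂ := inner ℂ (B x) x with hq
  set z : ℂ := Complex.exp ((q.arg / 2 : ℝ) * Complex.I) with hzdef
  have hznorm : ‖z‖ = 1 := by
    rw [hzdef]; exact Complex.norm_exp_ofReal_mul_I _
  have hz1 : z * conj z = 1 := by
    rw [Complex.mul_conj, Complex.normSq_eq_norm_sq]
    norm_cast
    rw [hznorm]; norm_num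
  have hzq : (‖q‖ : ℂ) * (z * z) = q := by
    rw [hzdef, ← Complex.exp_add]
    push_cast
    rw [show (↑(q.arg) / 2 * Complex.I + ↑(q.arg) / 2 * Complex.I) = q.arg * Complex.I by ring]
    exact Complex.norm_mul_exp_arg_mul_I q
  set s : ℝ := (Real.sqrt 2)⁻¹ with hsdef
  have hs2 : s ^ 2 = 1 / 2 := by
    rw [hsdef, inv_pow, Real.sq_sqrt (by norm_num : (0:ℝ) ≤ 2)]; norm_num
  have hs : (s : ℂ) * (s : ℂ) = 1 / 2 := by
    rw [← Complex.ofReal_mul, show s * s = 1 / 2 by nlinarith [hs2]]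
    norm_num
  set u : WithLp 2 (H × H) := (WithLp.equiv 2 (H × H)).symm (((s : ℂ) * z) • x, (s : ℂ) • x)
    with hudef
  have hufst : u.fst = ((s : ℂ) * z) • x := rfl
  have husnd : u.snd = (s : ℂ) • x := rfl
  have hs' : ‖(s : ℂ)‖ = s := by
    simp [hsdef, Complex.norm_real, abs_of_nonneg (inv_nonneg.2 (Real.sqrt_nonneg 2))]
  have hu : ‖u‖ = 1 := by
    have h2 : ‖u‖ ^ 2 = ‖u.fst‖ ^ 2 + ‖u.snd‖ ^ 2 := WithLp.prod_norm_sq_eq_of_L2 u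
    rw [hufst, husnd, norm_smul, norm_smul, norm_mul, hs', hznorm, hx] at h2
    nlinarith [norm_nonneg u, h2, hs2]
  have happ : offDiagOp A B u =
      (WithLp.equiv 2 (H × H)).symm (A u.snd, B u.fst) := rfl
  have hinner : (inner ℂ (offDiagOp A B u) u : ℂ) = z * (((r + ‖q‖) / 2 : ℝ) : ℂ) := by
    rw [happ]
    have : (inner ℂ ((WithLp.equiv 2 (H × H)).symm (A u.snd, B u.fst)) u : ℂ)
        = inner ℂ (A u.snd) u.fst + inner ℂ (B u.fst) u.snd := WithLp.prod_inner_apply _ _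
    rw [this, hufst, husnd, map_smul, map_smul, inner_smul_left, inner_smul_left,
      inner_smul_right, inner_smul_right, ← hq, hA]
    simp only [map_mul, Complex.conj_ofReal]
    push_cast
    linear_combination (z * (r:ℂ) + (‖q‖ : ℂ) * z * (z * conj z)) * hs
      + ((‖q‖ : ℂ) * z * (1/2)) * hz1 - (conj z * (s:ℂ) * (s:ℂ)) * hzq
  have := le_numRadius (offDiagOp A B) hu
  rw [hinner] at this
  have hn : ‖z * (((r + ‖q‖) / 2 : ℝ) : ℂ)‖ = (r + ‖q‖) / 2 := by
    rw [norm_mul, hznorm, one_mul, Complex.norm_real]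
    exact Real.norm_of_nonneg (by have := norm_nonneg q; linarith)
  rw [hn] at this
  exact this

variable [CompleteSpace H]

private lemma key_ineq (T : H →L[ℂ] H) {x : H} (hx : ‖x‖ = 1) :
    4 * ‖(inner ℂ (T x) x : ℂ)‖ ^ 2 ≤
      ‖(inner ℂ ((T ∘L T) x) x : ℂ)‖ + (3 / 2) * (‖T x‖ ^ 2 + ‖adjoint T x‖ ^ 2) := by
  set a : ℂ := inner ℂ (T x) x with ha
  have hxx : (inner ℂ x x : ℂ) = 1 := by
    rw [inner_self_eq_norm_sq_to_K, hx]; norm_num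
  have hax : (inner ℂ x (T x) : ℂ) = conj a := by rw [← inner_conj_symm, ha]
  have h1 : (inner ℂ x (adjoint T x) : ℂ) = a := by rw [adjoint_inner_right, ha]
  have h2 : (inner ℂ (adjoint T x) x : ℂ) = conj a := by rw [← inner_conj_symm, h1]
  have h3 : (inner ℂ (adjoint T x) (T x) : ℂ) = inner ℂ x ((T ∘L T) x) := by
    rw [adjoint_inner_left]; rfl
  set y : H := T x - conj a • x with hy
  set y' : H := adjoint T x - a • x with hy'
  have hyy' : (inner ℂ y' y : ℂ) = inner ℂ x ((T ∘L T) x) - (conj a) ^ 2 := by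
    simp only [hy, hy', inner_sub_left, inner_sub_right, inner_smul_left, inner_smul_right,
      h1, h2, h3, hax, hxx]
    ring_nf
    try simp [RCLike.conj_conj]
    try ring
  have hTx : (inner ℂ (T x) (T x) : ℂ) = (‖T x‖ : ℂ) ^ 2 := inner_self_eq_norm_sq_to_K (𝕜 := ℂ) _
  have hTsx : (inner ℂ (adjoint T x) (adjoint T x) : ℂ) = (‖adjoint T x‖ : ℂ) ^ 2 :=
    inner_self_eq_norm_sq_to_K (𝕜 := ℂ) _
  have hTxa : (inner ℂ (T x) x : ℂ) = a := rfl
  have hmul : a * conj a = ((‖a‖ : ℝ) : ℂ) ^ 2 := RCLike.mul_conj a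
  have hynorm : ‖y‖ ^ 2 = ‖T x‖ ^ 2 - ‖a‖ ^ 2 := by
    have hc : (inner ℂ y y : ℂ) = (‖T x‖ : ℂ) ^ 2 - ((‖a‖ : ℝ) : ℂ) ^ 2 := by
      simp only [hy, inner_sub_left, inner_sub_right, inner_smul_left, inner_smul_right,
        hTx, hTxa, hax, hxx]
      rw [← hmul]
      ring_nf
      try simp [RCLike.conj_conj]
      try ring
    have h := inner_self_eq_norm_sq (𝕜 := ℂ) y
    rw [hc] at h
    simp [← Complex.ofReal_pow] at h
    linarith [h]
  have hy'norm : ‖y'‖ ^ 2 = ‖adjoint T x‖ ^ 2 - ‖a‖ ^ 2 := by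
    have hc : (inner ℂ y' y' : ℂ) = (‖adjoint T x‖ : ℂ) ^ 2 - ((‖a‖ : ℝ) : ℂ) ^ 2 := by
      simp only [hy', inner_sub_left, inner_sub_right, inner_smul_left, inner_smul_right,
        hTsx, h1, h2, hxx]
      rw [← hmul]
      ring_nf
      try simp [RCLike.conj_conj]
      try ring
    have h := inner_self_eq_norm_sq (𝕜 := ℂ) y'
    rw [hc] at h
    simp [← Complex.ofReal_pow] at h
    linarith [h]
  have hD : ‖(inner ℂ x ((T ∘L T) x) : ℂ)‖ = ‖(inner ℂ ((T ∘L T) x) x : ℂ)‖ := by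
    rw [← inner_conj_symm]
    exact RCLike.norm_conj _
  have first : 2 * ‖a‖ ^ 2 ≤ ‖(inner ℂ ((T ∘L T) x) x : ℂ)‖
      + (‖T x‖ ^ 2 + ‖adjoint T x‖ ^ 2) / 2 := by
    have e1 : ‖a‖ ^ 2 = ‖(inner ℂ x ((T ∘L T) x) : ℂ) - inner ℂ y' y‖ := by
      rw [show (inner ℂ x ((T ∘L T) x) : ℂ) - inner ℂ y' y = (conj a) ^ 2 by
        rw [hyy']; ring]
      rw [norm_pow, RCLike.norm_conj]
    have e2 : ‖(inner ℂ x ((T ∘L T) x) : ℂ) - inner ℂ y' y‖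
        ≤ ‖(inner ℂ x ((T ∘L T) x) : ℂ)‖ + ‖(inner ℂ y' y : ℂ)‖ := norm_sub_le _ _
    have e3 : ‖(inner ℂ y' y : ℂ)‖ ≤ ‖y'‖ * ‖y‖ := norm_inner_le_norm _ _
    have e4 : ‖y'‖ * ‖y‖ ≤ (‖y‖ ^ 2 + ‖y'‖ ^ 2) / 2 := by nlinarith [sq_nonneg (‖y‖ - ‖y'‖)]
    rw [hD] at e2
    nlinarith [hynorm, hy'norm]
  have second : 2 * ‖a‖ ^ 2 ≤ ‖T x‖ ^ 2 + ‖adjoint T x‖ ^ 2 := by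
    have e1 : ‖a‖ ≤ ‖T x‖ := by
      calc ‖a‖ ≤ ‖T x‖ * ‖x‖ := norm_inner_le_norm _ _
        _ = ‖T x‖ := by rw [hx, mul_one]
    have e2 : ‖a‖ ≤ ‖adjoint T x‖ := by
      calc ‖a‖ = ‖(inner ℂ x (adjoint T x) : ℂ)‖ := by rw [h1]
        _ ≤ ‖x‖ * ‖adjoint T x‖ := norm_inner_le_norm _ _
        _ = ‖adjoint T x‖ := by rw [hx, one_mul]
    nlinarith [norm_nonneg a, norm_nonneg (T x), norm_nonneg (adjoint T x)]
  linarith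

end Aux

theorem numRadius_sq_le_half_numRadius_offDiag
    {H : Type*} [NormedAddCommGroup H] [InnerProductSpace ℂ H] [CompleteSpace H]
    (T : H →L[ℂ] H) :
    numRadius T ^ 2 ≤
      (1 / 2) * numRadius (offDiagOp
        (((3 : ℂ) / 2) • (adjoint T ∘L T + T ∘L adjoint T))
        (T ∘L T)) := by
  set A : H →L[ℂ] H := ((3 : ℂ) / 2) • (adjoint T ∘L T + T ∘L adjoint T) with hAdef
  set M := offDiagOp A (T ∘L T) with hMdef
  have hM0 : 0 ≤ numRadius M := numRadius_nonneg' M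
  have key : ∀ x : H, ‖x‖ = 1 → ‖(inner ℂ (T x) x : ℂ)‖ ^ 2 ≤ (1 / 2) * numRadius M := by
    intro x hx
    have h1 := key_ineq T hx
    set S : ℝ := ‖T x‖ ^ 2 + ‖adjoint T x‖ ^ 2 with hS
    have hr : 0 ≤ (3 / 2) * S := by positivity
    have e1 : (inner ℂ (adjoint T (T x)) x : ℂ) = (‖T x‖ : ℂ) ^ 2 := by
      rw [adjoint_inner_left]
      exact inner_self_eq_norm_sq_to_K (𝕜 := ℂ) _
    have e2 : (inner ℂ (T (adjoint T x)) x : ℂ) = (‖adjoint T x‖ : ℂ) ^ 2 := by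
      rw [← inner_conj_symm, ← adjoint_inner_left,
        inner_self_eq_norm_sq_to_K (𝕜 := ℂ) (adjoint T x)]
      simp [← Complex.ofReal_pow, Complex.conj_ofReal]
    have hA : (inner ℂ (A x) x : ℂ) = (((3 / 2) * S : ℝ) : ℂ) := by
      rw [hAdef]
      simp only [ContinuousLinearMap.smul_apply, ContinuousLinearMap.add_apply,
        ContinuousLinearMap.comp_apply, inner_smul_left, inner_add_left, e1, e2]
      rw [show conj ((3:ℂ)/2) = (3:ℂ)/2 by simp [map_div₀, map_ofNat], hS]
      push_cast
      ring
    have h2 := numRadius_offDiag_ge A (T ∘L T) hx hr hA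
    rw [← hMdef] at h2
    have hDnn : 0 ≤ ‖(inner ℂ ((T ∘L T) x) x : ℂ)‖ := norm_nonneg _
    nlinarith [h1, h2]
  rcases isEmpty_or_nonempty {x : H // ‖x‖ = 1} with hE | hNE
  · have : numRadius T = 0 := by
      rw [numRadius, Real.iSup_of_isEmpty]
    rw [this]
    norm_num
    linarith
  · have h0 : 0 ≤ numRadius T := numRadius_nonneg' T
    have hc : 0 ≤ (1 / 2) * numRadius M := by linarith
    have h1 : numRadius T ≤ Real.sqrt ((1 / 2) * numRadius M) := by
      rw [numRadius]
      refine ciSup_le ?_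
      rintro ⟨x, hx⟩
      calc ‖(inner ℂ (T x) x : ℂ)‖ = Real.sqrt (‖(inner ℂ (T x) x : ℂ)‖ ^ 2) :=
            (Real.sqrt_sq (norm_nonneg _)).symm
        _ ≤ Real.sqrt ((1 / 2) * numRadius M) := Real.sqrt_le_sqrt (key x hx)
    calc numRadius T ^ 2 ≤ Real.sqrt ((1 / 2) * numRadius M) ^ 2 := by
          exact pow_le_pow_left₀ h0 h1 2
      _ = (1 / 2) * numRadius M := Real.sq_sqrt hc
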